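/- There exists R₀ > 0 such that the hitting time of the closed ball K = {x : |x| ≤ R₀} by solutions of the ODE ẋ = c(x) is sublinear in the initial condition: for every ε > 0 there exists M > 0 such that for every y ∈ ℝⁿ with |y| ≥ M and every differentiable curve x: [0,∞) → ℝⁿ with x(0) = y and x′(t) = c(x(t)) for all t ≥ 0, there exists a time t ≤ ε·|y| with |x(t)| ≤ R₀. -/

import Mathlib

open MeasureTheory Filter Real Set
open scoped InnerProductSpace

noncomputable section

/-- Euclidean space ℝⁿ. -/
abbrev Euc (n : ℕ) := EuclideanSpace ℝ (Fin n)

/-- `InHT n T x φ φ'` : `φ : [0,T] → ℝⁿ` is an absolutely continuous path starting at `x`,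
with (a.e.) derivative `φ'` which is square integrable on `[0,T]`. -/
def InHT (n : ℕ) (T : ℝ) (x : Euc n) (φ φ' : ℝ → Euc n) : Prop :=
  φ 0 = x ∧
  IntervalIntegrable φ' volume 0 T ∧
  IntervalIntegrable (fun t => ‖φ' t‖ ^ 2) volume 0 T ∧
  ∀ t ∈ Set.Icc (0 : ℝ) T, φ t = x + ∫ s in (0 : ℝ)..t, φ' s

/-- Freidlin–Wentzell action functional `I^x_T`. -/
def FW (n : ℕ) (c : Euc n → Euc n) (T : ℝ) (φ φ' : ℝ → Euc n) : ℝ :=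
  (1 / 2) * ∫ t in (0 : ℝ)..T, ‖φ' t - c (φ t)‖ ^ 2

/-- Power dissipated by the vector field `b` along the path, `L_T`. -/
def Diss (n : ℕ) (b : Euc n → Euc n) (T : ℝ) (φ φ' : ℝ → Euc n) : ℝ :=
  (2 / T) * ∫ t in (0 : ℝ)..T, ⟪b (φ t), φ' t⟫_ℝ

/-- `S^{xy}_T(q)`, infimum of the action over paths from `x` to `y` dissipating power `q`. -/
def Sxy (n : ℕ) (b c : Euc n → Euc n) (T : ℝ) (x y : Euc n) (q : ℝ) : ℝ :=
  sInf { r : ℝ | ∃ φ φ' : ℝ → Euc n,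
    InHT n T x φ φ' ∧ φ T = y ∧ Diss n b T φ φ' = q ∧ FW n c T φ φ' = r }

/-- `S^{x}_T(q)`, infimum of the action over paths from `x` with free endpoint. -/
def Sx (n : ℕ) (b c : Euc n → Euc n) (T : ℝ) (x : Euc n) (q : ℝ) : ℝ :=
  sInf { r : ℝ | ∃ φ φ' : ℝ → Euc n,
    InHT n T x φ φ' ∧ Diss n b T φ φ' = q ∧ FW n c T φ φ' = r }

/-- `s^x(q) = inf_{T>0} S^{xx}_T(q)/T`. -/
def sfun (n : ℕ) (b c : Euc n → Euc n) (x : Euc n) (q : ℝ) : ℝ :=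
  sInf { r : ℝ | ∃ T : ℝ, 0 < T ∧ r = Sxy n b c T x x q / T }

/-- Assumption (A). -/
def AssumptionA (n : ℕ) (V : Euc n → ℝ) : Prop :=
  ContDiff ℝ 2 V ∧
  Tendsto (fun x : Euc n => ⟪gradient V x, x⟫_ℝ / ‖x‖) (cocompact (Euc n)) atTop

/-- Assumption (B): `b` is `C¹`, bounded with bounded derivative and not conservative. -/
def AssumptionB (n : ℕ) (b : Euc n → Euc n) : Prop :=
  ContDiff ℝ 1 b ∧
  (∃ M : ℝ, ∀ x, ‖b x‖ ≤ M) ∧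
  (∃ M : ℝ, ∀ x, ‖fderiv ℝ b x‖ ≤ M) ∧
  ¬ ∃ F : Euc n → ℝ, Differentiable ℝ F ∧ ∀ x, gradient F x = b x


/-- Quantitative decay along an interval from a derivative bound. -/
lemma decay_aux {g g' : ℝ → ℝ} {a b K : ℝ} (hab : a ≤ b)
    (hg : ∀ t ∈ Set.Icc a b, HasDerivAt g (g' t) t)
    (hle : ∀ t ∈ Set.Icc a b, g' t ≤ -K) :
    g b ≤ g a - K * (b - a) := by
  have hK : ∀ t : ℝ, HasDerivAt (fun u : ℝ => K * u) K t := by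
    intro t; simpa using (hasDerivAt_id t).const_mul K
  have key : AntitoneOn (fun t => g t + K * t) (Set.Icc a b) := by
    apply antitoneOn_of_deriv_nonpos (convex_Icc a b)
    · intro t ht
      exact ((hg t ht).add (hK t)).continuousAt.continuousWithinAt
    · intro t ht
      rw [interior_Icc] at ht
      exact (((hg t (Set.Ioo_subset_Icc_self ht)).add
        (hK t)).differentiableAt).differentiableWithinAt
    · intro t ht
      rw [interior_Icc] at ht
      have hd : HasDerivAt (fun t => g t + K * t) (g' t + K) t :=
        (hg t (Set.Ioo_subset_Icc_self ht)).add (hK t)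
      rw [hd.deriv]
      linarith [hle t (Set.Ioo_subset_Icc_self ht)]
  have := key (Set.left_mem_Icc.2 hab) (Set.right_mem_Icc.2 hab) hab
  simp only at this
  nlinarith

/-- Coercivity of `c` from assumption (A) and boundedness of `b`. -/
lemma coercive_aux (n : ℕ) (V : Euc n → ℝ) (b c : Euc n → Euc n)
    (hA : AssumptionA n V) (hbB : ∃ M : ℝ, ∀ z, ‖b z‖ ≤ M)
    (hc : ∀ z, c z = -(1/2 : ℝ) • gradient V z + b z) (C : ℝ) :
    ∃ R : ℝ, 1 ≤ R ∧ ∀ x : Euc n, R ≤ ‖x‖ → ⟪c x, x⟫_ℝ ≤ -C * ‖x‖ := by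
  obtain ⟨Mb, hMb⟩ := hbB
  set A : ℝ := 2 * (C + Mb) with hA2
  have hev : ∀ᶠ x in cocompact (Euc n), A ≤ ⟪gradient V x, x⟫_ℝ / ‖x‖ :=
    hA.2.eventually (eventually_ge_atTop A)
  rw [Filter.eventually_iff, mem_cocompact] at hev
  obtain ⟨K, hKc, hKs⟩ := hev
  obtain ⟨r, hr⟩ := hKc.isBounded.exists_norm_le
  refine ⟨max (r + 1) 1, le_max_right _ _, fun x hx => ?_⟩
  have hxr : r < ‖x‖ := by
    have := le_trans (le_max_left (r+1) 1) hx; linarith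
  have hx1 : (1:ℝ) ≤ ‖x‖ := le_trans (le_max_right (r+1) 1) hx
  have hxpos : (0:ℝ) < ‖x‖ := lt_of_lt_of_le one_pos hx1
  have hxK : x ∉ K := fun h => absurd (hr x h) (not_le.2 hxr)
  have hAx : A ≤ ⟪gradient V x, x⟫_ℝ / ‖x‖ := hKs hxK
  have hgrad : A * ‖x‖ ≤ ⟪gradient V x, x⟫_ℝ := by
    rw [le_div_iff₀ hxpos] at hAx; linarith
  have hbx : ⟪b x, x⟫_ℝ ≤ Mb * ‖x‖ := by
    calc ⟪b x, x⟫_ℝ ≤ ‖b x‖ * ‖x‖ := real_inner_le_norm _ _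
    _ ≤ Mb * ‖x‖ := by nlinarith [hMb x, norm_nonneg x]
  have : ⟪c x, x⟫_ℝ = -(1/2 : ℝ) * ⟪gradient V x, x⟫_ℝ + ⟪b x, x⟫_ℝ := by
    rw [hc x, inner_add_left, real_inner_smul_left]
  rw [this]
  nlinarith [hgrad, hbx]

/-- Derivative of the norm along a solution curve. -/
lemma norm_deriv_aux {n : ℕ} {c : Euc n → Euc n} {γ : ℝ → Euc n} {t : ℝ}
    (hγ : HasDerivAt γ (c (γ t)) t) (hne : γ t ≠ 0) :
    HasDerivAt (fun s => ‖γ s‖) (⟪c (γ t), γ t⟫_ℝ / ‖γ t‖) t := by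
  have hf : HasDerivAt (fun s => ⟪γ s, γ s⟫_ℝ) (2 * ⟪c (γ t), γ t⟫_ℝ) t := by
    have := hγ.inner ℝ hγ
    exact this.congr_deriv (by rw [real_inner_comm (γ t) (c (γ t))]; ring)
  have hne' : ⟪γ t, γ t⟫_ℝ ≠ 0 := by
    exact fun h => hne (inner_self_eq_zero.1 h)
  have hs := hf.sqrt hne'
  have heq : (fun s => Real.sqrt ⟪γ s, γ s⟫_ℝ) = fun s => ‖γ s‖ := by
    funext s
    rw [real_inner_self_eq_norm_sq, Real.sqrt_sq (norm_nonneg _)]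
  rw [heq] at hs
  convert hs using 1
  rw [real_inner_self_eq_norm_sq, Real.sqrt_sq (norm_nonneg _)]
  field_simp

/-- there is `R₀ > 0` such that the hitting time of the ball of radius `R₀`
by solutions of `ẋ = c(x)` is sublinear in the initial condition. -/
theorem statement13 (n : ℕ) (V : Euc n → ℝ) (b c : Euc n → Euc n)
    (hA : AssumptionA n V) (hb : ContDiff ℝ 1 b)
    (hbB : ∃ M : ℝ, ∀ z, ‖b z‖ ≤ M) (hbD : ∃ M : ℝ, ∀ z, ‖fderiv ℝ b z‖ ≤ M)
    (hc : ∀ z, c z = -(1/2 : ℝ) • gradient V z + b z) :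
    ∃ R₀ : ℝ, 0 < R₀ ∧ ∀ ε : ℝ, 0 < ε → ∃ M : ℝ, 0 < M ∧
      ∀ y : Euc n, M ≤ ‖y‖ →
        ∀ γ : ℝ → Euc n, γ 0 = y → (∀ t : ℝ, 0 ≤ t → HasDerivAt γ (c (γ t)) t) →
          ∃ t : ℝ, 0 ≤ t ∧ t ≤ ε * ‖y‖ ∧ ‖γ t‖ ≤ R₀ := by
  obtain ⟨R₁, hR₁1, hR₁⟩ := coercive_aux n V b c hA hbB hc 1
  refine ⟨R₁, lt_of_lt_of_le one_pos hR₁1, fun ε hε => ?_⟩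
  obtain ⟨R₂', hR₂'1, hR₂'⟩ := coercive_aux n V b c hA hbB hc (2/ε)
  set R₂ : ℝ := max R₂' R₁ with hR₂def
  have hR₂R₁ : R₁ ≤ R₂ := le_max_right _ _
  have hR₂prop : ∀ x : Euc n, R₂ ≤ ‖x‖ → ⟪c x, x⟫_ℝ ≤ -(2/ε) * ‖x‖ :=
    fun x hx => hR₂' x (le_trans (le_max_left _ _) hx)
  refine ⟨max 1 (2*(R₂ - R₁)/ε), lt_of_lt_of_le one_pos (le_max_left _ _), ?_⟩
  intro y hy γ hγ0 hγ'
  have hy1 : (1:ℝ) ≤ ‖y‖ := le_trans (le_max_left _ _) hy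
  have hy2 : 2*(R₂ - R₁)/ε ≤ ‖y‖ := le_trans (le_max_right _ _) hy
  by_contra hcon
  push_neg at hcon
  set T : ℝ := ε * ‖y‖ with hTdef
  have hT : 0 < T := mul_pos hε (lt_of_lt_of_le one_pos hy1)
  have hbig : ∀ t ∈ Set.Icc (0:ℝ) T, R₁ < ‖γ t‖ := fun t ht => hcon t ht.1 ht.2
  set g' : ℝ → ℝ := fun t => ⟪c (γ t), γ t⟫_ℝ / ‖γ t‖ with hg'def
  have hder : ∀ t ∈ Set.Icc (0:ℝ) T, HasDerivAt (fun s => ‖γ s‖) (g' t) t := by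
    intro t ht
    have hpos : (0:ℝ) < ‖γ t‖ := lt_of_lt_of_le (lt_of_lt_of_le one_pos hR₁1) (le_of_lt (hbig t ht))
    exact norm_deriv_aux (hγ' t ht.1) (norm_pos_iff.1 hpos)
  have hd1 : ∀ t ∈ Set.Icc (0:ℝ) T, g' t ≤ -1 := by
    intro t ht
    have hpos : (0:ℝ) < ‖γ t‖ := lt_of_lt_of_le (lt_of_lt_of_le one_pos hR₁1) (le_of_lt (hbig t ht))
    have := hR₁ (γ t) (le_of_lt (hbig t ht))
    rw [hg'def]
    rw [div_le_iff₀ hpos]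
    nlinarith
  -- decay with rate 1 between any two times
  have hdec1 : ∀ s t : ℝ, s ∈ Set.Icc (0:ℝ) T → t ∈ Set.Icc (0:ℝ) T → s ≤ t →
      ‖γ t‖ ≤ ‖γ s‖ - (t - s) := by
    intro s t hs ht hst
    have := decay_aux (g := fun u => ‖γ u‖) (g' := g') (K := 1) hst
      (fun u hu => hder u ⟨le_trans hs.1 hu.1, le_trans hu.2 ht.2⟩)
      (fun u hu => hd1 u ⟨le_trans hs.1 hu.1, le_trans hu.2 ht.2⟩)
    linarith
  set t₀ : ℝ := T/2 with ht₀def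
  have ht₀mem : t₀ ∈ Set.Icc (0:ℝ) T := ⟨by positivity, by linarith⟩
  have hTmem : T ∈ Set.Icc (0:ℝ) T := ⟨le_of_lt hT, le_refl _⟩
  have h0mem : (0:ℝ) ∈ Set.Icc (0:ℝ) T := ⟨le_refl _, le_of_lt hT⟩
  by_cases hcase : ‖γ t₀‖ ≤ R₂
  · -- Case A
    have hAB := hdec1 t₀ T ht₀mem hTmem (by linarith)
    have hfin : ‖γ T‖ ≤ R₂ - T/2 := by linarith
    have hy3 : R₂ - R₁ ≤ ε * ‖y‖ / 2 := by
      rw [div_le_iff₀ hε] at hy2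
      rw [le_div_iff₀ (by norm_num : (0:ℝ) < 2)]
      linarith
    have hbigT := hbig T hTmem
    linarith [hTdef]
  · -- Case B
    push_neg at hcase
    have hge : ∀ t ∈ Set.Icc (0:ℝ) t₀, R₂ ≤ ‖γ t‖ := by
      intro t ht
      have := hdec1 t t₀ ⟨ht.1, le_trans ht.2 ht₀mem.2⟩ ht₀mem ht.2
      linarith [ht.2]
    have hd2 : ∀ t ∈ Set.Icc (0:ℝ) t₀, g' t ≤ -(2/ε) := by
      intro t ht
      have hmem : t ∈ Set.Icc (0:ℝ) T := ⟨ht.1, le_trans ht.2 ht₀mem.2⟩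
      have hpos : (0:ℝ) < ‖γ t‖ :=
        lt_of_lt_of_le (lt_of_lt_of_le one_pos hR₁1) (le_of_lt (hbig t hmem))
      have := hR₂prop (γ t) (hge t ht)
      rw [hg'def, div_le_iff₀ hpos]
      nlinarith
    have hdec2 := decay_aux (g := fun u => ‖γ u‖) (g' := g') (K := 2/ε) ht₀mem.1
      (fun u hu => hder u ⟨hu.1, le_trans hu.2 ht₀mem.2⟩) hd2
    have hc2 : (2/ε) * (t₀ - 0) = ‖y‖ := by
      rw [ht₀def, hTdef]; field_simp; ring
    simp only [hγ0] at hdec2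
    have hR₂1 : (1:ℝ) ≤ R₂ := le_trans hR₁1 hR₂R₁
    linarith [hdec2, hc2, hcase]
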